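/- Assume the Gauss–Legendre abscissae satisfy c_{k−i+1} = 1 − c_i and b_{k−i+1} = b_i for i = 1,…,k. If (γ̂_j, ρ̂_{ij}) solves the PHBVM(k,s) nonlinear system starting from y_0 producing y_1 = y_0 + h∑_{j=0}^{s-1} ρ̂_{0j} γ̂_j, then (γ_j* , ρ_{ij}*) := ((−1)^j γ̂_j, (−1)^{i+j} ρ̂_{ij}) solves the corresponding system with initial value y_1 and stepsize −h, and the resulting step brings y_1 back to y_0: y_1 − h ∑_{j=0}^{s-1} ρ*_{0j} γ*_j = y_0. Hence the PHBVM(k,s) method is symmetric. -/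

import Mathlib

open Matrix

open Polynomial intervalIntegral

lemma span_aux (P : ℕ → ℝ[X]) (hdeg : ∀ j, (P j).natDegree = j) (hne : ∀ j, P j ≠ 0) :
    ∀ d, ∀ p : ℝ[X], p.natDegree ≤ d →
      ∃ f : ℕ → ℝ, p = ∑ j ∈ Finset.range (d+1), Polynomial.C (f j) * P j := by
  intro d
  induction d with
  | zero =>
    intro p hp
    set b := (P 0).coeff 0 with hb
    have h0 : P 0 = Polynomial.C b := eq_C_of_natDegree_eq_zero (hdeg 0)
    have hc : b ≠ 0 := by
      intro hc; apply hne 0; rw [h0, hc, map_zero]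
    obtain ⟨a, rfl⟩ : ∃ a, p = Polynomial.C a :=
      ⟨p.coeff 0, eq_C_of_natDegree_eq_zero (Nat.le_zero.mp hp)⟩
    refine ⟨fun _ => a / b, ?_⟩
    rw [Finset.sum_range_one, h0, ← Polynomial.C_mul, div_mul_cancel₀ _ hc]
  | succ d ih =>
    intro p hp
    rcases Nat.lt_or_ge p.natDegree (d+1) with hlt | hge
    · obtain ⟨f, hf⟩ := ih p (Nat.lt_succ_iff.mp hlt)
      refine ⟨Function.update f (d+1) 0, ?_⟩
      rw [Finset.sum_range_succ, Function.update_self, map_zero, zero_mul, add_zero, hf]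
      refine Finset.sum_congr rfl fun j hj => ?_
      rw [Function.update_of_ne (by simp only [Finset.mem_range] at hj; omega)]
    · have hdp : p.natDegree = d + 1 := le_antisymm hp hge
      have hp0 : p ≠ 0 := fun h0 => by simp [h0] at hdp
      have hPl : (P (d+1)).leadingCoeff ≠ 0 := leadingCoeff_ne_zero.mpr (hne _)
      set α := p.leadingCoeff / (P (d+1)).leadingCoeff with hα
      have hα0 : α ≠ 0 := div_ne_zero (leadingCoeff_ne_zero.mpr hp0) hPl
      set q := p - Polynomial.C α * P (d+1) with hq
      have hdegeq : p.degree = (Polynomial.C α * P (d+1)).degree := by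
        rw [degree_C_mul hα0, degree_eq_natDegree hp0, degree_eq_natDegree (hne _), hdp, hdeg]
      have hlceq : p.leadingCoeff = (Polynomial.C α * P (d+1)).leadingCoeff := by
        rw [leadingCoeff_mul, leadingCoeff_C, hα, div_mul_cancel₀ _ hPl]
      have hqd : q.natDegree ≤ d := by
        rcases eq_or_ne q 0 with h0 | h0
        · simp [h0]
        · have := degree_sub_lt hdegeq hp0 hlceq
          rw [degree_eq_natDegree hp0, hdp] at this
          have := (natDegree_lt_iff_degree_lt h0).mpr this
          omega
      obtain ⟨f, hf⟩ := ih q hqd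
      refine ⟨Function.update f (d+1) α, ?_⟩
      rw [Finset.sum_range_succ, Function.update_self]
      have : ∑ j ∈ Finset.range (d+1), Polynomial.C (Function.update f (d+1) α j) * P j = q := by
        rw [hf]
        refine Finset.sum_congr rfl fun j hj => ?_
        rw [Function.update_of_ne (by simp only [Finset.mem_range] at hj; omega)]
      rw [this, hq]; ring

lemma pint (p q : ℝ[X]) : IntervalIntegrable (fun x => p.eval x * q.eval x)
    MeasureTheory.volume (0:ℝ) 1 :=
  (p.continuous.mul q.continuous).intervalIntegrable _ _

lemma sum_int (n : ℕ) (P : ℕ → ℝ[X]) (f : ℕ → ℝ)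
    (horth : ∀ i j, (∫ x in (0:ℝ)..1, (P i).eval x * (P j).eval x) = if i = j then 1 else 0)
    (i : ℕ) (hi : i < n) :
    (∫ x in (0:ℝ)..1, (∑ j ∈ Finset.range n, Polynomial.C (f j) * P j).eval x * (P i).eval x)
      = f i := by
  have heval : ∀ x : ℝ, (∑ j ∈ Finset.range n, Polynomial.C (f j) * P j).eval x * (P i).eval x
      = ∑ j ∈ Finset.range n, f j * ((P j).eval x * (P i).eval x) := by
    intro x
    rw [eval_finset_sum, Finset.sum_mul]
    exact Finset.sum_congr rfl fun j _ => by rw [eval_mul, eval_C]; ring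
  rw [intervalIntegral.integral_congr (g := fun x => ∑ j ∈ Finset.range n,
      f j * ((P j).eval x * (P i).eval x)) (fun x _ => heval x)]
  rw [intervalIntegral.integral_finset_sum (fun j _ => ((pint (P j) (P i)).const_mul (f j)))]
  have : ∀ j ∈ Finset.range n, (∫ x in (0:ℝ)..1, f j * ((P j).eval x * (P i).eval x))
      = if j = i then f j else 0 := by
    intro j _
    rw [intervalIntegral.integral_const_mul, horth j i]
    split <;> simp
  rw [Finset.sum_congr rfl this, Finset.sum_ite_eq' (Finset.range n) i f, if_pos (Finset.mem_range.mpr hi)]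

lemma P0_eq (P : ℕ → ℝ[X]) (hdeg : ∀ j, (P j).natDegree = j)
    (horth : ∀ i j, (∫ x in (0:ℝ)..1, (P i).eval x * (P j).eval x) = if i = j then 1 else 0)
    (hlead : ∀ j, 0 < (P j).leadingCoeff) : P 0 = Polynomial.C 1 := by
  set a := (P 0).coeff 0 with ha
  have h0 : P 0 = Polynomial.C a := eq_C_of_natDegree_eq_zero (hdeg 0)
  have hsq : a * a = 1 := by
    have := horth 0 0
    rw [if_pos rfl] at this
    rw [← this, h0]
    simp
  have hpos : 0 < a := by have := hlead 0; rwa [h0, leadingCoeff_C] at this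
  have : a = 1 := by nlinarith
  rw [h0, this]

lemma orthonormal_unique (P Q : ℕ → ℝ[X])
    (hPdeg : ∀ j, (P j).natDegree = j) (hQdeg : ∀ j, (Q j).natDegree = j)
    (hPorth : ∀ i j, (∫ x in (0:ℝ)..1, (P i).eval x * (P j).eval x) = if i = j then 1 else 0)
    (hQorth : ∀ i j, (∫ x in (0:ℝ)..1, (Q i).eval x * (Q j).eval x) = if i = j then 1 else 0)
    (hPlead : ∀ j, 0 < (P j).leadingCoeff) (hQlead : ∀ j, 0 < (Q j).leadingCoeff) :
    ∀ n, P n = Q n := by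
  intro n
  induction n using Nat.strong_induction_on with
  | _ n ih =>
  rcases Nat.eq_zero_or_pos n with rfl | hn
  · rw [P0_eq P hPdeg hPorth hPlead, P0_eq Q hQdeg hQorth hQlead]
  have hPne : ∀ j, P j ≠ 0 := fun j => leadingCoeff_ne_zero.mp (ne_of_gt (hPlead j))
  have hQn0 : Q n ≠ 0 := leadingCoeff_ne_zero.mp (ne_of_gt (hQlead n))
  set α := (Q n).leadingCoeff / (P n).leadingCoeff with hα
  have hαpos : 0 < α := div_pos (hQlead n) (hPlead n)
  set r := Q n - Polynomial.C α * P n with hr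
  have hdegeq : (Q n).degree = (Polynomial.C α * P n).degree := by
    rw [degree_C_mul (ne_of_gt hαpos), degree_eq_natDegree hQn0,
      degree_eq_natDegree (hPne n), hPdeg, hQdeg]
  have hlceq : (Q n).leadingCoeff = (Polynomial.C α * P n).leadingCoeff := by
    rw [leadingCoeff_mul, leadingCoeff_C, hα, div_mul_cancel₀ _ (ne_of_gt (hPlead n))]
  have hrd : r.natDegree ≤ n - 1 := by
    rcases eq_or_ne r 0 with h0 | h0
    · simp [h0]
    · have := degree_sub_lt hdegeq hQn0 hlceq
      rw [degree_eq_natDegree hQn0, hQdeg] at this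
      have := (natDegree_lt_iff_degree_lt h0).mpr this
      omega
  obtain ⟨f, hf⟩ := span_aux P hPdeg hPne (n-1) r hrd
  rw [show n - 1 + 1 = n by omega] at hf
  -- each f i = 0
  have hf0 : ∀ i ∈ Finset.range n, f i = 0 := by
    intro i hi
    have hi' := Finset.mem_range.mp hi
    have h1 : (∫ x in (0:ℝ)..1, r.eval x * (P i).eval x) = f i := by
      rw [hf]; exact sum_int n P f hPorth i hi'
    have h2 : (∫ x in (0:ℝ)..1, r.eval x * (P i).eval x) = 0 := by
      have heq : ∀ x : ℝ, r.eval x * (P i).eval x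
          = (Q n).eval x * (Q i).eval x - α * ((P n).eval x * (P i).eval x) := by
        intro x; rw [hr, ih i hi']; simp [eval_mul]; ring
      rw [intervalIntegral.integral_congr (fun x _ => heq x),
        intervalIntegral.integral_sub (pint _ _) ((pint (P n) (P i)).const_mul α),
        intervalIntegral.integral_const_mul, hQorth, hPorth,
        if_neg (show ¬n = i by omega)]
      ring
    rw [← h1, h2]
  have hr0 : r = 0 := by
    rw [hf, Finset.sum_congr rfl (fun j hj => by rw [hf0 j hj])]
    simp
  have hQP : Q n = Polynomial.C α * P n := by
    have := sub_eq_zero.mp hr0; rw [this]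
  have hα1 : α = 1 := by
    have h11 := hQorth n n
    rw [if_pos rfl] at h11
    have heq : ∀ x : ℝ, (Q n).eval x * (Q n).eval x
        = (α * α) * ((P n).eval x * (P n).eval x) := by
      intro x; rw [hQP]; simp [eval_mul]; ring
    rw [intervalIntegral.integral_congr (fun x _ => heq x),
      intervalIntegral.integral_const_mul, hPorth, if_pos rfl, mul_one] at h11
    nlinarith
  rw [hQP, hα1, Polynomial.C_1, one_mul]

lemma legendre_symm (P : ℕ → ℝ[X])
    (hdeg : ∀ j, (P j).natDegree = j)
    (horth : ∀ i j, (∫ x in (0:ℝ)..1, (P i).eval x * (P j).eval x) = if i = j then 1 else 0)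
    (hlead : ∀ j, 0 < (P j).leadingCoeff) :
    ∀ j (x : ℝ), (P j).eval (1 - x) = (-1:ℝ)^j * (P j).eval x := by
  have hsq : ∀ j : ℕ, ((-1:ℝ)^j) * ((-1:ℝ)^j) = 1 := by
    intro j; rw [← pow_add]; exact Even.neg_one_pow ⟨j, rfl⟩
  set q : ℝ[X] := 1 - Polynomial.X with hqdef
  have hqn : q = -(Polynomial.X - Polynomial.C 1) := by rw [hqdef, Polynomial.C_1]; ring
  have hqdeg : q.natDegree = 1 := by rw [hqn, natDegree_neg, natDegree_X_sub_C]
  have hqlc : q.leadingCoeff = -1 := by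
    rw [hqn, leadingCoeff_neg, (monic_X_sub_C (1:ℝ)).leadingCoeff]
  have hqev : ∀ x : ℝ, q.eval x = 1 - x := by intro x; simp [hqdef]
  set Q : ℕ → ℝ[X] := fun j => Polynomial.C ((-1:ℝ)^j) * (P j).comp q with hQdef
  have hPne : ∀ j, P j ≠ 0 := fun j => leadingCoeff_ne_zero.mp (ne_of_gt (hlead j))
  have hne : ∀ j : ℕ, ((-1:ℝ)^j) ≠ 0 := fun j => pow_ne_zero _ (by norm_num)
  have hev : ∀ j (x : ℝ), (Q j).eval x = (-1:ℝ)^j * (P j).eval (1 - x) := by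
    intro j x; rw [hQdef]; simp only [eval_mul, eval_C, eval_comp, hqev]
  have hQdeg : ∀ j, (Q j).natDegree = j := by
    intro j; rw [hQdef]
    simp only [natDegree_C_mul (hne j), natDegree_comp, hqdeg, hdeg, mul_one]
  have hQlead : ∀ j, 0 < (Q j).leadingCoeff := by
    intro j
    rw [hQdef]
    simp only [leadingCoeff_mul, leadingCoeff_C,
      leadingCoeff_comp (by rw [hqdeg]; norm_num), hqlc, hdeg]
    calc (0:ℝ) < (P j).leadingCoeff * (((-1:ℝ)^j) * ((-1:ℝ)^j)) := by
          rw [hsq j, mul_one]; exact hlead j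
      _ = (-1:ℝ)^j * ((P j).leadingCoeff * (-1:ℝ)^j) := by ring
  have hQorth : ∀ i j, (∫ x in (0:ℝ)..1, (Q i).eval x * (Q j).eval x)
      = if i = j then 1 else 0 := by
    intro i j
    have heq : ∀ x : ℝ, (Q i).eval x * (Q j).eval x
        = ((-1:ℝ)^i * (-1:ℝ)^j) * ((P i).eval (1-x) * (P j).eval (1-x)) := by
      intro x; rw [hev, hev]; ring
    rw [intervalIntegral.integral_congr (fun x _ => heq x),
      intervalIntegral.integral_const_mul]
    have hcv : (∫ x in (0:ℝ)..1, (P i).eval (1-x) * (P j).eval (1-x))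
        = ∫ x in (0:ℝ)..1, (P i).eval x * (P j).eval x := by
      have := intervalIntegral.integral_comp_sub_left
        (a := (0:ℝ)) (b := 1) (fun x => (P i).eval x * (P j).eval x) 1
      simpa using this
    rw [hcv, horth]
    rcases eq_or_ne i j with rfl | hij
    · rw [if_pos rfl, mul_one, hsq]
    · rw [if_neg hij, mul_zero]
  have hPQ := orthonormal_unique P Q hdeg hQdeg horth hQorth hlead hQlead
  intro j x
  have := congrArg (Polynomial.eval x) (hPQ j)
  rw [hev] at this
  calc (P j).eval (1 - x) = ((-1:ℝ)^j * (-1:ℝ)^j) * (P j).eval (1-x) := by rw [hsq, one_mul]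
    _ = (-1:ℝ)^j * (P j).eval x := by rw [mul_assoc, ← this]

/-- Symmetry of the PHBVM(k,s) method: if `(γ̂_j, ρ̂_{ij})` solves the PHBVM system
starting from `y₀` with stepsize `h`, producing `y₁`, and the quadrature abscissae
and weights are symmetric, then `(γ*_j, ρ*_{ij}) = ((-1)^j γ̂_j, (-1)^{i+j} ρ̂_{ij})`
solves the system with initial value `y₁` and stepsize `-h`, and the resulting step
brings `y₁` back to `y₀`. -/
theorem stmt_16 (m s k : ℕ) (h : ℝ) (y0 : Fin m → ℝ)
    (P : ℕ → Polynomial ℝ)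
    (hdeg : ∀ j, (P j).natDegree = j)
    (horth : ∀ i j, (∫ x in (0:ℝ)..1, (P i).eval x * (P j).eval x)
      = if i = j then 1 else 0)
    (hlead : ∀ j, 0 < (P j).leadingCoeff)
    (c w : Fin k → ℝ)
    (hcsym : ∀ ℓ : Fin k, c ℓ.rev = 1 - c ℓ)
    (hwsym : ∀ ℓ : Fin k, w ℓ.rev = w ℓ)
    (B : (Fin m → ℝ) → Matrix (Fin m) (Fin m) ℝ)
    (gradH : (Fin m → ℝ) → (Fin m → ℝ))
    (γ : ℕ → (Fin m → ℝ)) (ρ : ℕ → ℕ → Matrix (Fin m) (Fin m) ℝ)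
    (Y : Fin k → (Fin m → ℝ))
    (hY : ∀ ℓ : Fin k, Y ℓ = y0 + h • ∑ μ ∈ Finset.range s, ∑ ν ∈ Finset.range s,
      (∫ x in (0:ℝ)..(c ℓ), (P μ).eval x) • (ρ μ ν).mulVec (γ ν))
    (hγ : ∀ j < s, γ j = ∑ ℓ : Fin k, (w ℓ * (P j).eval (c ℓ)) • gradH (Y ℓ))
    (hρ : ∀ i < s, ∀ j < s, ρ i j =
      ∑ ℓ : Fin k, (w ℓ * ((P i).eval (c ℓ) * (P j).eval (c ℓ))) • B (Y ℓ))
    (y1 : Fin m → ℝ)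
    (hy1 : y1 = y0 + h • ∑ j ∈ Finset.range s, (ρ 0 j).mulVec (γ j))
    (γs : ℕ → (Fin m → ℝ)) (ρs : ℕ → ℕ → Matrix (Fin m) (Fin m) ℝ)
    (hγs : ∀ j, γs j = ((-1 : ℝ)) ^ j • γ j)
    (hρs : ∀ i j, ρs i j = ((-1 : ℝ)) ^ (i + j) • ρ i j)
    (Ys : Fin k → (Fin m → ℝ))
    (hYs : ∀ ℓ : Fin k, Ys ℓ = y1 - h • ∑ μ ∈ Finset.range s, ∑ ν ∈ Finset.range s,
      (∫ x in (0:ℝ)..(c ℓ), (P μ).eval x) • (ρs μ ν).mulVec (γs ν)) :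
    (∀ j < s, γs j = ∑ ℓ : Fin k, (w ℓ * (P j).eval (c ℓ)) • gradH (Ys ℓ)) ∧
    (∀ i < s, ∀ j < s, ρs i j =
      ∑ ℓ : Fin k, (w ℓ * ((P i).eval (c ℓ) * (P j).eval (c ℓ))) • B (Ys ℓ)) ∧
    y1 - h • ∑ j ∈ Finset.range s, (ρs 0 j).mulVec (γs j) = y0 := by
  have hsq : ∀ j : ℕ, ((-1:ℝ)^j) * ((-1:ℝ)^j) = 1 := by
    intro j; rw [← pow_add]; exact Even.neg_one_pow ⟨j, rfl⟩
  have hPsym := legendre_symm P hdeg horth hlead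
  have hP0 : P 0 = Polynomial.C 1 := P0_eq P hdeg horth hlead
  have hint1 : ∀ μ : ℕ, (∫ x in (0:ℝ)..1, (P μ).eval x) = if 0 = μ then 1 else 0 := by
    intro μ
    have h0 := horth 0 μ
    have he : ∀ x : ℝ, (P 0).eval x * (P μ).eval x = (P μ).eval x := by
      intro x; rw [hP0]; simp
    rw [show (∫ x in (0:ℝ)..1, (P 0).eval x * (P μ).eval x)
      = ∫ x in (0:ℝ)..1, (P μ).eval x from
      intervalIntegral.integral_congr (fun x _ => he x)] at h0
    exact h0
  have hpint : ∀ (μ : ℕ) (a b : ℝ),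
      IntervalIntegrable (fun x => (P μ).eval x) MeasureTheory.volume a b :=
    fun μ a b => (P μ).continuous.intervalIntegrable a b
  have hintc : ∀ (μ : ℕ) (t : ℝ), (∫ x in (0:ℝ)..(1-t), (P μ).eval x)
      = (if 0 = μ then 1 else 0) - (-1:ℝ)^μ * ∫ x in (0:ℝ)..t, (P μ).eval x := by
    intro μ t
    have h1 : (∫ x in (0:ℝ)..t, (P μ).eval (1 - x))
        = ∫ x in (1 - t : ℝ)..(1:ℝ), (P μ).eval x := by
      have := intervalIntegral.integral_comp_sub_left (a := (0:ℝ)) (b := t)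
        (fun x => (P μ).eval x) 1
      simpa using this
    have h2 : (∫ x in (0:ℝ)..t, (P μ).eval (1 - x))
        = (-1:ℝ)^μ * ∫ x in (0:ℝ)..t, (P μ).eval x := by
      rw [intervalIntegral.integral_congr (fun x _ => hPsym μ x),
        intervalIntegral.integral_const_mul]
    have hadd : (∫ x in (0:ℝ)..(1-t), (P μ).eval x)
        + (∫ x in (1-t:ℝ)..1, (P μ).eval x) = ∫ x in (0:ℝ)..1, (P μ).eval x :=
      intervalIntegral.integral_add_adjacent_intervals (hpint μ _ _) (hpint μ _ _)
    rw [hint1 μ] at hadd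
    rw [← h1, h2] at hadd
    linarith
  -- the key identity : Ys ℓ = Y ℓ.rev
  have key : ∀ ℓ : Fin k, Ys ℓ = Y ℓ.rev := by
    intro ℓ
    set I : ℕ → ℝ := fun μ => ∫ x in (0:ℝ)..(c ℓ), (P μ).eval x with hI
    set X : ℕ → ℕ → (Fin m → ℝ) := fun μ ν => (ρ μ ν).mulVec (γ ν) with hX
    have hYs' : Ys ℓ = y1 - h • ∑ μ ∈ Finset.range s, ∑ ν ∈ Finset.range s,
        ((-1:ℝ)^μ * I μ) • X μ ν := by
      rw [hYs ℓ]
      congr 1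
      congr 1
      refine Finset.sum_congr rfl fun μ _ => Finset.sum_congr rfl fun ν _ => ?_
      rw [hρs, hγs, Matrix.smul_mulVec, Matrix.mulVec_smul,
        smul_smul, smul_smul]
      congr 1
      calc (∫ x in (0:ℝ)..(c ℓ), (P μ).eval x) * (-1:ℝ)^(μ+ν) * (-1:ℝ)^ν
          = ((-1:ℝ)^ν * (-1:ℝ)^ν) * ((-1:ℝ)^μ * I μ) := by simp only [hI, pow_add]; ring
        _ = (-1:ℝ)^μ * I μ := by rw [hsq, one_mul]
    have hdelta : ∑ μ ∈ Finset.range s, ∑ ν ∈ Finset.range s,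
        ((if 0 = μ then (1:ℝ) else 0)) • X μ ν
        = ∑ j ∈ Finset.range s, (ρ 0 j).mulVec (γ j) := by
      have h1 : ∀ μ, (∑ ν ∈ Finset.range s, ((if 0 = μ then (1:ℝ) else 0)) • X μ ν)
          = if 0 = μ then ∑ ν ∈ Finset.range s, X μ ν else 0 := by
        intro μ; split <;> simp
      rw [Finset.sum_congr rfl fun μ _ => h1 μ, Finset.sum_ite_eq]
      rcases Nat.eq_zero_or_pos s with rfl | hs
      · simp
      · rw [if_pos (Finset.mem_range.mpr hs)]
    have hsplit : ∑ μ ∈ Finset.range s, ∑ ν ∈ Finset.range s,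
        (∫ x in (0:ℝ)..(c ℓ.rev), (P μ).eval x) • X μ ν
        = (∑ j ∈ Finset.range s, (ρ 0 j).mulVec (γ j))
          - ∑ μ ∈ Finset.range s, ∑ ν ∈ Finset.range s, ((-1:ℝ)^μ * I μ) • X μ ν := by
      rw [← hdelta, ← Finset.sum_sub_distrib]
      refine Finset.sum_congr rfl fun μ _ => ?_
      rw [← Finset.sum_sub_distrib]
      refine Finset.sum_congr rfl fun ν _ => ?_
      rw [← sub_smul]
      congr 1
      rw [hcsym ℓ]
      exact hintc μ (c ℓ)
    rw [hYs', hY ℓ.rev, hsplit, hy1, smul_sub]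
    abel
  refine ⟨?_, ?_, ?_⟩
  · intro j hj
    rw [hγs j, hγ j hj, Finset.smul_sum]
    refine (Fintype.sum_equiv Fin.revPerm _ _ ?_).symm
    intro ℓ
    show (w ℓ * (P j).eval (c ℓ)) • gradH (Ys ℓ)
      = (-1:ℝ)^j • ((w ℓ.rev * (P j).eval (c ℓ.rev)) • gradH (Y ℓ.rev))
    rw [key ℓ, hwsym ℓ, hcsym ℓ, hPsym j, smul_smul]
    congr 1
    calc w ℓ * (P j).eval (c ℓ)
        = ((-1:ℝ)^j * (-1:ℝ)^j) * (w ℓ * (P j).eval (c ℓ)) := by rw [hsq, one_mul]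
      _ = (-1:ℝ)^j * (w ℓ * ((-1:ℝ)^j * (P j).eval (c ℓ))) := by ring
  · intro i hi j hj
    rw [hρs i j, hρ i hi j hj, Finset.smul_sum]
    refine (Fintype.sum_equiv Fin.revPerm _ _ ?_).symm
    intro ℓ
    show (w ℓ * ((P i).eval (c ℓ) * (P j).eval (c ℓ))) • B (Ys ℓ)
      = (-1:ℝ)^(i+j) • ((w ℓ.rev * ((P i).eval (c ℓ.rev) * (P j).eval (c ℓ.rev))) • B (Y ℓ.rev))
    rw [key ℓ, hwsym ℓ, hcsym ℓ, hPsym i, hPsym j, smul_smul]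
    congr 1
    calc w ℓ * ((P i).eval (c ℓ) * (P j).eval (c ℓ))
        = (((-1:ℝ)^i * (-1:ℝ)^i) * ((-1:ℝ)^j * (-1:ℝ)^j))
            * (w ℓ * ((P i).eval (c ℓ) * (P j).eval (c ℓ))) := by rw [hsq, hsq]; ring
      _ = (-1:ℝ)^(i+j) * (w ℓ * ((-1:ℝ)^i * (P i).eval (c ℓ)
            * ((-1:ℝ)^j * (P j).eval (c ℓ)))) := by rw [pow_add]; ring
  · have hterm : ∀ j, (ρs 0 j).mulVec (γs j) = (ρ 0 j).mulVec (γ j) := by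
      intro j
      rw [hρs, hγs, Matrix.smul_mulVec, Matrix.mulVec_smul, smul_smul,
        zero_add, hsq, one_smul]
    rw [Finset.sum_congr rfl fun j _ => hterm j, hy1]
    abel
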